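/- arXiv:2506.18265 — 2 statements merged into one kernel-verified Lean document; each statement's English description precedes it below -/
import Mathlib

section
/- Let n, r ∈ ℕ, let C, A₁, …, A_r be real symmetric n×n matrices, b ∈ ℝ^r, let L ⊆ [n]×[n], and fix bounds u_{ij} ≤ l_{ij} for (i,j) ∈ L. Define the ISDP feasible set F = {X symmetric : ⟨A_i,X⟩ = b_i for all i ∈ [r], X ⪰ 0, and for all (i,j) ∈ L, X_{ij} ∈ ℤ and u_{ij} ≤ X_{ij} ≤ l_{ij}}. Let X^L be a symmetric matrix, let (y, γ, S) with γ supported on L, y ∈ ℝ^r, and S := C − Σ_{i=1}^r y_i A_i − γ ⪰ 0, and suppose X' ∈ F satisfies X'_{ij} = X^L_{ij} for all (i,j) ∈ L and ⟨C, X'⟩ = bᵀy + ⟨γ, X^L⟩ (strong duality between SDP(X^L) and DSDP(X^L)). Define the outer-approximation feasible set G = {X symmetric : ⟨A_i,X⟩ = b_i for all i ∈ [r], ⟨X, S⟩ ≥ 0, and for all (i,j) ∈ L, X_{ij} ∈ ℤ and u_{ij} ≤ X_{ij} ≤ l_{ij}}. If X̂ ∈ G satisfies ⟨C, X̂⟩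 ≤ ⟨C, Y⟩ for all Y ∈ G and X̂_{ij} = X^L_{ij} for all (i,j) ∈ L, then X' is globally optimal for the ISDP, i.e. ⟨C, X'⟩ ≤ ⟨C, Y⟩ for all Y ∈ F. -/
open Matrix


lemma trace_nonneg_of_posSemidef {n : ℕ} {M : Matrix (Fin n) (Fin n) ℝ}
    (hM : M.PosSemidef) : 0 ≤ M.trace := by
  rw [Matrix.trace]
  apply Finset.sum_nonneg
  intro i _
  exact hM.diag_nonneg

lemma trace_mul_nonneg_of_posSemidef {n : ℕ} {X S : Matrix (Fin n) (Fin n) ℝ}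
    (hX : X.PosSemidef) (hS : S.PosSemidef) : 0 ≤ (X * S).trace := by
  obtain ⟨B, rfl⟩ : ∃ B : Matrix (Fin n) (Fin n) ℝ, S = Bᴴ * B := by
    open MatrixOrder in
    have h0 : (0 : Matrix (Fin n) (Fin n) ℝ) ≤ S := Matrix.nonneg_iff_posSemidef.mpr hS
    open MatrixOrder in
    exact ⟨CFC.sqrt S, by
      rw [← star_eq_conjTranspose, (CFC.sqrt_nonneg S).isSelfAdjoint.star_eq]
      exact (CFC.sqrt_mul_sqrt_self S h0).symm⟩
  have h1 : (X * (Bᴴ * B)).trace = (B * X * Bᴴ).trace := by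
    rw [← Matrix.mul_assoc, Matrix.trace_mul_comm, ← Matrix.mul_assoc]
  rw [h1]
  exact trace_nonneg_of_posSemidef (hX.mul_mul_conjTranspose_same B)

lemma trace_gamma_eq {n : ℕ} (L : Set (Fin n × Fin n))
    (γ Z XL : Matrix (Fin n) (Fin n) ℝ)
    (hγsupp : ∀ i j, (i, j) ∉ L → γ i j = 0)
    (hZ : Z.IsSymm) (hXL : XL.IsSymm)
    (hfix : ∀ i j, (i, j) ∈ L → Z i j = XL i j) :
    (γ * Z).trace = (γ * XL).trace := by
  simp only [Matrix.trace, Matrix.diag, Matrix.mul_apply]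
  refine Finset.sum_congr rfl fun i _ => Finset.sum_congr rfl fun j _ => ?_
  by_cases h : (i, j) ∈ L
  · rw [hZ.apply, hfix i j h, ← hXL.apply]
  · rw [hγsupp i j h, zero_mul, zero_mul]

/-- termination argument for the outer approximation algorithm.
If strong duality holds between `SDP(X^L)` and `DSDP(X^L)` with primal optimal
`X'`, and the outer approximation `OASDP` (with the single cut `⟨X, S⟩ ≥ 0`)
has an optimal solution `X̂` whose integer part equals `X^L`, then `X'` is
globally optimal for the ISDP. -/
theorem stmt_1 (n r : ℕ) (C : Matrix (Fin n) (Fin n) ℝ) (hC : C.IsSymm)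
    (A : Fin r → Matrix (Fin n) (Fin n) ℝ) (hA : ∀ i, (A i).IsSymm)
    (b : Fin r → ℝ) (L : Set (Fin n × Fin n)) (u l : Fin n → Fin n → ℝ)
    (hul : ∀ p ∈ L, u p.1 p.2 ≤ l p.1 p.2)
    (XL : Matrix (Fin n) (Fin n) ℝ) (hXL : XL.IsSymm)
    -- dual feasible triple (y, γ, S) for DSDP(X^L)
    (y : Fin r → ℝ) (γ : Matrix (Fin n) (Fin n) ℝ) (hγ : γ.IsSymm)
    (hγsupp : ∀ i j, (i, j) ∉ L → γ i j = 0)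
    (hSpsd : (C - ∑ i, y i • A i - γ).PosSemidef)
    -- the ISDP feasible set F
    (F : Set (Matrix (Fin n) (Fin n) ℝ))
    (hF : F = {X | X.IsSymm ∧ (∀ i, (A i * X).trace = b i) ∧ X.PosSemidef ∧
      ∀ p ∈ L, (∃ m : ℤ, X p.1 p.2 = (m : ℝ)) ∧
        u p.1 p.2 ≤ X p.1 p.2 ∧ X p.1 p.2 ≤ l p.1 p.2})
    -- the outer-approximation feasible set G
    (G : Set (Matrix (Fin n) (Fin n) ℝ))
    (hG : G = {X | X.IsSymm ∧ (∀ i, (A i * X).trace = b i) ∧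
      (X * (C - ∑ i, y i • A i - γ)).trace ≥ 0 ∧
      ∀ p ∈ L, (∃ m : ℤ, X p.1 p.2 = (m : ℝ)) ∧
        u p.1 p.2 ≤ X p.1 p.2 ∧ X p.1 p.2 ≤ l p.1 p.2})
    -- X' : primal optimal for SDP(X^L), with strong duality
    (X' : Matrix (Fin n) (Fin n) ℝ) (hX'F : X' ∈ F)
    (hX'fix : ∀ i j, (i, j) ∈ L → X' i j = XL i j)
    (hstrong : (C * X').trace = (∑ i, b i * y i) + (γ * XL).trace)
    -- X̂ : optimal for the outer approximation, with integer part X^L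
    (Xhat : Matrix (Fin n) (Fin n) ℝ) (hXhatG : Xhat ∈ G)
    (hXhatopt : ∀ Y ∈ G, (C * Xhat).trace ≤ (C * Y).trace)
    (hXhatfix : ∀ i j, (i, j) ∈ L → Xhat i j = XL i j) :
    ∀ Y ∈ F, (C * X').trace ≤ (C * Y).trace := by
  
  set S := C - ∑ i, y i • A i - γ with hS
  have hexp : ∀ Z : Matrix (Fin n) (Fin n) ℝ,
      (Z * S).trace = (C * Z).trace - (∑ i, y i * (A i * Z).trace) - (γ * Z).trace := by
    intro Z
    rw [hS, mul_sub, mul_sub, trace_sub, trace_sub, Matrix.mul_sum, trace_sum]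
    rw [Matrix.trace_mul_comm Z C, Matrix.trace_mul_comm Z γ]
    congr 1
    congr 1
    refine Finset.sum_congr rfl fun i _ => ?_
    rw [mul_smul_comm, trace_smul, Matrix.trace_mul_comm Z (A i), smul_eq_mul]
  intro Y hY
  subst hF hG
  obtain ⟨hYs, hYb, hYpsd, hYL⟩ := hY
  obtain ⟨hXhs, hXhb, hXhcut, hXhL⟩ := hXhatG
  have hYG : Y ∈ {X | X.IsSymm ∧ (∀ i, (A i * X).trace = b i) ∧
      (X * S).trace ≥ 0 ∧
      ∀ p ∈ L, (∃ m : ℤ, X p.1 p.2 = (m : ℝ)) ∧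
        u p.1 p.2 ≤ X p.1 p.2 ∧ X p.1 p.2 ≤ l p.1 p.2} :=
    ⟨hYs, hYb, trace_mul_nonneg_of_posSemidef hYpsd hSpsd, hYL⟩
  have h1 : (C * X').trace ≤ (C * Xhat).trace := by
    have e1 := hexp Xhat
    rw [trace_gamma_eq L γ Xhat XL hγsupp hXhs hXL hXhatfix] at e1
    have e2 : (∑ i, y i * (A i * Xhat).trace) = ∑ i, b i * y i := by
      refine Finset.sum_congr rfl fun i _ => ?_
      rw [hXhb i, mul_comm]
    rw [e2] at e1
    rw [hstrong]
    linarith [e1, hXhcut]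
  exact h1.trans (hXhatopt Y hYG)
end

section
/- Let n, r, q ∈ ℕ, C, A₁, …, A_r real symmetric n×n matrices, d₀, d₁, …, d_r ∈ ℝⁿ, b ∈ ℝ^r, D ∈ ℝ^{q×n}, and t ∈ ℝ^q. Define the BQCQP objective-value set V₁ = { xᵀCx + 2d₀ᵀx : x ∈ ℝⁿ, x_i ∈ {0,1} for all i, xᵀA_ix + 2d_iᵀx ≤ b_i for all i ∈ [r], Dx = t }, and the BSDP objective-value set V₂ = { ⟨C, X⟩ + 2d₀ᵀx : X real symmetric n×n, x ∈ ℝⁿ, ⟨A_i, X⟩ + 2d_iᵀx ≤ b_i for all i ∈ [r], Dx = t, X − xxᵀ ⪰ 0, diag(X) = x, x_i ∈ {0,1} for all i }. Then V₁ = V₂; in particular, the two optimization problems have the same optimal value. -/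
open Matrix

lemma trace_mul_vecMulVec {n : ℕ} (M : Matrix (Fin n) (Fin n) ℝ) (x : Fin n → ℝ) :
    (M * vecMulVec x x).trace = x ⬝ᵥ M *ᵥ x := by
  simp only [Matrix.trace, Matrix.diag, Matrix.mul_apply, vecMulVec_apply,
    dotProduct, mulVec, Finset.mul_sum]
  exact Finset.sum_congr rfl fun i _ => Finset.sum_congr rfl fun j _ => by ring

lemma psd_diag_zero_eq_zero {n : ℕ} {M : Matrix (Fin n) (Fin n) ℝ}
    (hM : M.PosSemidef) (hd : ∀ i, M i i = 0) : M = 0 := by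
  ext i j
  have hsym := hM.1
  have hji : M j i = M i j := by
    have h := congrFun (congrFun hsym j) i
    simp only [conjTranspose_apply, star_trivial] at h
    exact h.symm
  have key : ∀ c : ℝ, 0 ≤ c * (2 * M i j) := by
    intro c
    have := hM.dotProduct_mulVec_nonneg (Pi.single i 1 + Pi.single j c)
    simp only [RCLike.star_def, star_trivial] at this
    rw [mulVec_add, dotProduct_add, add_dotProduct, add_dotProduct] at this
    have h1 : Pi.single i (1:ℝ) ⬝ᵥ M *ᵥ Pi.single i 1 = M i i := by
      simp [dotProduct, mulVec, Pi.single_apply, Finset.sum_ite_eq']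
    have h2 : Pi.single j c ⬝ᵥ M *ᵥ Pi.single j c = c * M j j * c := by
      simp [dotProduct, mulVec, Pi.single_apply, Finset.sum_ite_eq', mul_comm]
    have h3 : Pi.single i (1:ℝ) ⬝ᵥ M *ᵥ Pi.single j c = M i j * c := by
      simp [dotProduct, mulVec, Pi.single_apply, Finset.sum_ite_eq']
    have h4 : Pi.single j c ⬝ᵥ M *ᵥ Pi.single i 1 = c * M j i := by
      simp [dotProduct, mulVec, Pi.single_apply, Finset.sum_ite_eq']
    rw [h1, h2, h3, h4, hd i, hd j, hji] at this
    nlinarith [this]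
  have h1 := key (-M i j)
  simp only [Matrix.zero_apply]
  nlinarith [h1]

open Matrix

/-- exactness of the BSDP reformulation of a BQCQP — the set of
attainable objective values of the BQCQP equals that of the BSDP. -/
theorem stmt_13 (n r q : ℕ)
    (C : Matrix (Fin n) (Fin n) ℝ) (hC : C.IsSymm)
    (A : Fin r → Matrix (Fin n) (Fin n) ℝ) (hA : ∀ i, (A i).IsSymm)
    (d0 : Fin n → ℝ) (d : Fin r → Fin n → ℝ) (b : Fin r → ℝ)
    (D : Matrix (Fin q) (Fin n) ℝ) (t : Fin q → ℝ) :
    {val : ℝ | ∃ x : Fin n → ℝ, (∀ i, x i = 0 ∨ x i = 1) ∧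
        (∀ i : Fin r, x ⬝ᵥ A i *ᵥ x + 2 * (d i ⬝ᵥ x) ≤ b i) ∧
        D *ᵥ x = t ∧
        val = x ⬝ᵥ C *ᵥ x + 2 * (d0 ⬝ᵥ x)} =
    {val : ℝ | ∃ (X : Matrix (Fin n) (Fin n) ℝ) (x : Fin n → ℝ), X.IsSymm ∧
        (∀ i : Fin r, (A i * X).trace + 2 * (d i ⬝ᵥ x) ≤ b i) ∧
        D *ᵥ x = t ∧
        (X - vecMulVec x x).PosSemidef ∧
        (∀ i, X i i = x i) ∧
        (∀ i, x i = 0 ∨ x i = 1) ∧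
        val = (C * X).trace + 2 * (d0 ⬝ᵥ x)} := by
  ext v
  simp only [Set.mem_setOf_eq]
  constructor
  · rintro ⟨x, hbin, hcons, hlin, hval⟩
    refine ⟨vecMulVec x x, x, ?_, ?_, hlin, ?_, ?_, hbin, ?_⟩
    · unfold Matrix.IsSymm
      ext i j
      simp [vecMulVec_apply, mul_comm]
    · intro i; rw [trace_mul_vecMulVec]; exact hcons i
    · simpa using Matrix.PosSemidef.zero (n := Fin n) (R := ℝ)
    · intro i
      rcases hbin i with h | h <;> simp [vecMulVec_apply, h]
    · rw [trace_mul_vecMulVec]; exact hval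
  · rintro ⟨X, x, hXs, hcons, hlin, hpsd, hdiag, hbin, hval⟩
    have hz : X - vecMulVec x x = 0 := by
      apply psd_diag_zero_eq_zero hpsd
      intro i
      simp only [Matrix.sub_apply, vecMulVec_apply, hdiag i]
      rcases hbin i with h | h <;> simp [h]
    have hX : X = vecMulVec x x := by
      have := sub_eq_zero.mp hz; exact this
    subst hX
    refine ⟨x, hbin, ?_, hlin, ?_⟩
    · intro i; rw [← trace_mul_vecMulVec]; exact hcons i
    · rw [← trace_mul_vecMulVec]; exact hval
end
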